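/- (Lemma 3.3) Let 0 ≤ η < 1 and let u ∈ H with ‖u‖₀ = 1 and λ(u) < λ₂; set λ = λ(u). Let w ∈ H be the unique solution of a(w,χ) = a(u,χ) − λ(u,χ) for all χ ∈ H and let v ∈ H satisfy ‖v − w‖ ≤ η‖w‖. Then ‖v‖² ≤ ((1 + η)/(1 − η)) (λ₂/λ₁) (λ − λ₁). -/

import Mathlib

open scoped RealInnerProductSpace

/-- The Rayleigh quotient `λ(u) = a(u,u)/(u,u)`, where `a = ⟪·,·⟫` is the inner product of the
Hilbert space `H` (inducing the energy norm `‖·‖`) and `b` is the second inner product `(·,·)`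
(inducing the weaker norm `‖·‖₀ = √(b u u)`). Note `⟪u,u⟫ = ‖u‖²`. -/
noncomputable def rayleigh {H : Type*} [NormedAddCommGroup H] [InnerProductSpace ℝ H]
    (b : LinearMap.BilinForm ℝ H) (u : H) : ℝ :=
  ‖u‖ ^ 2 / b u u

set_option linter.unusedVariables false

lemma bilin_cs {H : Type*} [AddCommGroup H] [Module ℝ H] (b : LinearMap.BilinForm ℝ H)
    (hsymm : ∀ x y, b x y = b y x) (hnn : ∀ x : H, 0 ≤ b x x) (x y : H) :
    (b x y)^2 ≤ b x x * b y y := by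
  have h : ∀ t : ℝ, 0 ≤ b y y * (t*t) + (2 * b x y) * t + b x x := by
    intro t
    have h0 := hnn (x + t • y)
    simp only [map_add, map_smul, LinearMap.add_apply, LinearMap.smul_apply, smul_eq_mul] at h0
    rw [hsymm y x] at h0
    ring_nf at h0 ⊢
    linarith
  have h2 := discrim_le_zero h
  simp only [discrim] at h2
  nlinarith

set_option maxHeartbeats 2000000 in
/-- Lemma 3.3: `‖v‖² ≤ ((1 + η)/(1 − η)) (λ₂/λ₁) (λ − λ₁)`. -/
theorem energy_norm_v_bound {H : Type*} [NormedAddCommGroup H] [InnerProductSpace ℝ H] [CompleteSpace H]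
    (b : LinearMap.BilinForm ℝ H)
    (hb_symm : ∀ x y : H, b x y = b y x)
    (hb_pos : ∀ x : H, x ≠ 0 → 0 < b x x)
    (lam1 : ℝ) (hlam1 : 0 < lam1)
    (hmin : ∀ x : H, x ≠ 0 → lam1 ≤ rayleigh b x)
    (hE1 : ∃ x : H, x ≠ 0 ∧ ∀ χ : H, ⟪ x, χ⟫ = lam1 * b x χ)
    (lam2 : ℝ) (hlam12 : lam1 < lam2)
    (hmin2 : ∀ x : H, x ≠ 0 →
      (∀ χ₁ : H, (∀ χ : H, ⟪χ₁, χ⟫ = lam1 * b χ₁ χ) → b x χ₁ = 0) →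
      lam2 ≤ rayleigh b x)
    (eta : ℝ) (heta0 : 0 ≤ eta) (heta1 : eta < 1)
    (u w v : H) (hu : b u u = 1) (hlt : rayleigh b u < lam2)
    (hw : ∀ χ : H, ⟪w, χ⟫ = ⟪u, χ⟫ - rayleigh b u * b u χ)
    (hv : ‖v - w‖ ≤ eta * ‖w‖) :
    ‖v‖ ^ 2 ≤ (1 + eta) / (1 - eta) * (lam2 / lam1) * (rayleigh b u - lam1) := by
  classical
  have hbnn : ∀ x : H, 0 ≤ b x x := by
    intro x; by_cases hx : x = 0
    · simp [hx]
    · exact (hb_pos x hx).le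
  have hu0 : u ≠ 0 := by intro h; rw [h] at hu; simp at hu
  set lam : ℝ := rayleigh b u with hlamdef
  have hray : lam = ‖u‖ ^ 2 := by simp [hlamdef, rayleigh, hu]
  have hlam_ge : lam1 ≤ lam := hmin u hu0
  have hlam_lt : lam < lam2 := hlt
  have hCS := bilin_cs b hb_symm hbnn
  have hb_le : ∀ x : H, lam1 * b x x ≤ ‖x‖ ^ 2 := by
    intro x
    by_cases hx : x = 0
    · simp [hx]
    · have h1 := hmin x hx
      rw [rayleigh, le_div_iff₀ (hb_pos x hx)] at h1
      linarith
  -- continuity of b in the first argument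
  have hcont : ∀ y : H, Continuous fun x : H => b x y := by
    intro y
    have hbound : ∀ x : H, ‖(b.flip y) x‖ ≤ Real.sqrt (b y y / lam1) * ‖x‖ := by
      intro x
      have h1 : (b x y)^2 ≤ (b y y / lam1) * ‖x‖^2 := by
        have h2 := hCS x y
        have h3 := hb_le x
        have h4 := hbnn y
        rw [div_mul_eq_mul_div, le_div_iff₀ hlam1]
        nlinarith
      have h5 : Real.sqrt ((b x y)^2) ≤ Real.sqrt ((Real.sqrt (b y y / lam1) * ‖x‖)^2) := by
        apply Real.sqrt_le_sqrt
        rw [mul_pow, Real.sq_sqrt (div_nonneg (hbnn y) hlam1.le)]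
        exact h1
      rwa [Real.sqrt_sq_eq_abs, Real.sqrt_sq (by positivity)] at h5
    exact (LinearMap.mkContinuous (b.flip y) _ hbound).continuous
  -- the eigenspace E₁ as a closed submodule
  set E : Submodule ℝ H :=
    { carrier := {x : H | ∀ χ : H, ⟪x, χ⟫ = lam1 * b x χ}
      add_mem' := by
        intro a c ha hc χ
        simp only [Set.mem_setOf_eq] at ha hc
        simp only [inner_add_left, map_add, LinearMap.add_apply, ha χ, hc χ]
        ring
      zero_mem' := by intro χ; simp
      smul_mem' := by
        intro r a ha χ
        simp only [Set.mem_setOf_eq] at ha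
        simp only [real_inner_smul_left, map_smul, LinearMap.smul_apply, smul_eq_mul, ha χ]
        ring } with hEdef
  have hmemE : ∀ x : H, x ∈ E ↔ ∀ χ : H, ⟪x, χ⟫ = lam1 * b x χ := fun x => Iff.rfl
  have hEclosed : IsClosed (E : Set H) := by
    have hset : (E : Set H) = ⋂ χ : H, {x : H | ⟪x, χ⟫ = lam1 * b x χ} := by
      ext x
      simp only [SetLike.mem_coe, hmemE, Set.mem_iInter, Set.mem_setOf_eq]
    rw [hset]
    exact isClosed_iInter fun χ =>
      isClosed_eq (continuous_id.inner continuous_const) (continuous_const.mul (hcont χ))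
  haveI : CompleteSpace E := hEclosed.completeSpace_coe
  set u1 : H := (E.orthogonalProjectionOnto u : H) with hu1def
  set u2 : H := u - u1 with hu2def
  have hu1mem : u1 ∈ E := (E.orthogonalProjectionOnto u).2
  have hu1E : ∀ χ : H, ⟪u1, χ⟫ = lam1 * b u1 χ := (hmemE u1).mp hu1mem
  have hu2orth : u2 ∈ Eᗮ := Submodule.sub_starProjection_mem_orthogonal u
  have hu2b : ∀ χ₁ : H, χ₁ ∈ E → b u2 χ₁ = 0 := by
    intro χ₁ hχ₁
    have h1 : ⟪χ₁, u2⟫ = 0 := (Submodule.mem_orthogonal E u2).mp hu2orth χ₁ hχ₁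
    have h2 := (hmemE χ₁).mp hχ₁ u2
    rw [h1] at h2
    rw [hb_symm]
    exact ((mul_eq_zero.mp h2.symm).resolve_left (ne_of_gt hlam1))
  have hu2M : ∀ χ₁ : H, (∀ χ : H, ⟪χ₁, χ⟫ = lam1 * b χ₁ χ) → b u2 χ₁ = 0 :=
    fun χ₁ h => hu2b χ₁ ((hmemE χ₁).mpr h)
  -- lower Rayleigh bound on the orthogonal complement
  have hM : ∀ x : H, (∀ χ₁ : H, (∀ χ : H, ⟪χ₁, χ⟫ = lam1 * b χ₁ χ) → b x χ₁ = 0) →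
      lam2 * b x x ≤ ‖x‖ ^ 2 := by
    intro x hx
    by_cases h0 : x = 0
    · simp [h0]
    · have h1 := hmin2 x h0 hx
      rw [rayleigh, le_div_iff₀ (hb_pos x h0)] at h1
      linarith
  -- Riesz representative T of b u2
  have hbound2 : ∀ χ : H, ‖(b u2) χ‖ ≤ Real.sqrt (b u2 u2 / lam1) * ‖χ‖ := by
    intro χ
    have h1 : (b u2 χ)^2 ≤ (b u2 u2 / lam1) * ‖χ‖^2 := by
      have h2 := hCS u2 χ
      have h3 := hb_le χ
      have h4 := hbnn u2
      rw [div_mul_eq_mul_div, le_div_iff₀ hlam1]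
      nlinarith
    have h5 : Real.sqrt ((b u2 χ)^2) ≤ Real.sqrt ((Real.sqrt (b u2 u2 / lam1) * ‖χ‖)^2) := by
      apply Real.sqrt_le_sqrt
      rw [mul_pow, Real.sq_sqrt (div_nonneg (hbnn u2) hlam1.le)]
      exact h1
    rwa [Real.sqrt_sq_eq_abs, Real.sqrt_sq (by positivity)] at h5
  set T : H := (InnerProductSpace.toDual ℝ H).symm
      (LinearMap.mkContinuous (b u2) _ hbound2) with hTdef
  have hT : ∀ χ : H, ⟪T, χ⟫ = b u2 χ := fun χ => InnerProductSpace.toDual_symm_apply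
  have hTM : ∀ χ₁ : H, (∀ χ : H, ⟪χ₁, χ⟫ = lam1 * b χ₁ χ) → b T χ₁ = 0 := by
    intro χ₁ hχ₁
    have h3 := hχ₁ T
    rw [real_inner_comm, hT χ₁, hu2M χ₁ hχ₁] at h3
    rw [hb_symm]
    exact ((mul_eq_zero.mp h3.symm).resolve_left (ne_of_gt hlam1))
  -- decomposition of w
  set z : H := u2 - lam • T with hzdef
  have hu12 : u = u1 + u2 := by rw [hu2def]; abel
  have hweq : w = ((lam1 - lam)/lam1) • u1 + z := by
    apply ext_inner_right ℝ
    intro χ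
    rw [hw χ]
    have hrhs : ⟪((lam1 - lam)/lam1) • u1 + z, χ⟫
        = ((lam1 - lam)/lam1) * ⟪u1, χ⟫ + ⟪u2, χ⟫ - lam * ⟪T, χ⟫ := by
      rw [hzdef]
      simp only [inner_add_left, inner_sub_left, real_inner_smul_left]
      ring
    rw [hrhs, hu1E χ, hT χ]
    have hbu : b u χ = b u1 χ + b u2 χ := by
      rw [hu12, map_add, LinearMap.add_apply]
    have hiu : ⟪u, χ⟫ = ⟪u1, χ⟫ + ⟪u2, χ⟫ := by rw [hu12, inner_add_left]
    rw [hiu, hbu, hu1E χ]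
    field_simp
    ring
  -- orthogonality and Pythagoras
  have hinner12 : ⟪u1, u2⟫ = 0 :=
    (Submodule.mem_orthogonal E u2).mp hu2orth u1 hu1mem
  have hinner1T : ⟪u1, T⟫ = 0 := by
    rw [real_inner_comm, hT u1]
    exact hu2b u1 hu1mem
  have horth : ⟪((lam1 - lam)/lam1) • u1, z⟫ = 0 := by
    rw [hzdef]
    simp only [real_inner_smul_left, inner_sub_right, real_inner_smul_right, hinner12, hinner1T]
    ring
  have hpyth : ‖w‖^2 = ((lam1 - lam)/lam1)^2 * ‖u1‖^2 + ‖z‖^2 := by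
    rw [hweq, norm_add_sq_real, horth]
    rw [norm_smul]
    simp only [Real.norm_eq_abs, mul_pow, sq_abs]
    ring
  -- scalar quantities
  have hbu12 : b u1 u2 = 0 := by rw [hb_symm]; exact hu2b u1 hu1mem
  have hsum : b u1 u1 + b u2 u2 = 1 := by
    have h0 : b u u = b u1 u1 + b u1 u2 + (b u2 u1 + b u2 u2) := by
      rw [hu12]
      simp only [map_add, LinearMap.add_apply]
      ring
    rw [hu] at h0
    rw [hbu12, hu2b u1 hu1mem] at h0
    linarith
  have hnu1 : ‖u1‖^2 = lam1 * b u1 u1 := by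
    rw [← real_inner_self_eq_norm_sq]; exact hu1E u1
  have hlameq : lam = lam1 * b u1 u1 + ‖u2‖^2 := by
    rw [hray, hu12, norm_add_sq_real, hinner12, ← hnu1]; ring
  have hs2 : lam2 * b u2 u2 ≤ ‖u2‖^2 := hM u2 hu2M
  have hnT : ‖T‖^2 = b u2 T := by
    rw [← real_inner_self_eq_norm_sq]; exact hT T
  have hqb : lam2 * b T T ≤ ‖T‖^2 := hM T hTM
  have hqle : lam2 * ‖T‖^2 ≤ b u2 u2 := by
    have hcs := hCS u2 T
    have hq0 : 0 ≤ ‖T‖^2 := sq_nonneg _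
    rcases eq_or_lt_of_le hq0 with h | h
    · rw [← h]; simpa using hbnn u2
    · rw [hnT] at h ⊢
      nlinarith [hbnn u2, hbnn T]
  have hzT : ⟪u2, T⟫ = b u2 u2 := by rw [real_inner_comm]; exact hT u2
  have hz2 : ‖z‖^2 = ‖u2‖^2 - 2*lam*(b u2 u2) + lam^2 * ‖T‖^2 := by
    rw [hzdef, norm_sub_sq_real, real_inner_smul_right, hzT, norm_smul]
    simp only [Real.norm_eq_abs, mul_pow, sq_abs]
    ring
  clear_value z T u2 u1
  clear hbound2 hTdef hzdef hT hTM hu2M hu2b hu1E hM hcont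
  clear hu1mem hu2orth hmemE hEclosed this hEdef hu1def hu2def
  clear_value E
  clear E
  -- main estimate on ‖w‖²
  have hlam0 : 0 ≤ lam := le_trans hlam1.le hlam_ge
  have hg1 : 0 ≤ b u1 u1 := hbnn u1
  have hg : 0 ≤ b u2 u2 := hbnn u2
  have key : (lam - lam1)^2 * b u1 u1 + lam1 * (‖u2‖^2 - 2*lam*(b u2 u2) + lam^2 * ‖T‖^2)
      ≤ lam2 * (lam - lam1) := by
    have hA : ‖u2‖^2 - lam * b u2 u2 = (lam - lam1) * b u1 u1 := by
      linear_combination -hlameq - lam * hsum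
    have hB : lam^2 * ‖T‖^2 ≤ lam * b u2 u2 := by
      have h1 : lam * ‖T‖^2 ≤ lam2 * ‖T‖^2 := by nlinarith [sq_nonneg ‖T‖]
      nlinarith [sq_nonneg ‖T‖]
    have hg1le : b u1 u1 ≤ 1 := by linarith
    nlinarith [mul_nonneg (sub_nonneg.mpr hlam_ge) hg1,
      mul_nonneg (sub_nonneg.mpr hlam_ge) (sub_nonneg.mpr hg1le),
      mul_nonneg (mul_nonneg (sub_nonneg.mpr hlam_ge) hg1) (sub_nonneg.mpr hlam_lt.le)]
  have hw2 : ‖w‖^2 ≤ lam2/lam1 * (lam - lam1) := by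
    rw [div_mul_eq_mul_div, le_div_iff₀ hlam1]
    have hexp : ‖w‖^2 * lam1
        = (lam - lam1)^2 * b u1 u1 + lam1 * (‖u2‖^2 - 2*lam*(b u2 u2) + lam^2 * ‖T‖^2) := by
      rw [hpyth, hz2, hnu1]
      field_simp
      ring
    rw [hexp]
    exact key
  -- conclude
  have hvle : ‖v‖ ≤ (1 + eta) * ‖w‖ := by
    have h1 : v = (v - w) + w := by abel
    calc ‖v‖ = ‖(v - w) + w‖ := by rw [← h1]
    _ ≤ ‖v - w‖ + ‖w‖ := norm_add_le _ _
    _ ≤ (1 + eta) * ‖w‖ := by linarith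
  have hv2 : ‖v‖^2 ≤ (1 + eta)^2 * ‖w‖^2 := by
    nlinarith [norm_nonneg v, norm_nonneg w]
  have hrhs0 : 0 ≤ lam2/lam1 * (lam - lam1) := by
    apply mul_nonneg (div_nonneg (by linarith) hlam1.le)
    linarith
  have hfac : (1 + eta)^2 ≤ (1 + eta)/(1 - eta) := by
    rw [le_div_iff₀ (by linarith)]
    nlinarith [sq_nonneg eta, mul_nonneg (mul_nonneg heta0 heta0) heta0]
  calc ‖v‖^2 ≤ (1 + eta)^2 * ‖w‖^2 := hv2
  _ ≤ (1 + eta)^2 * (lam2/lam1 * (lam - lam1)) := by nlinarith [sq_nonneg (1+eta)]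
  _ ≤ (1 + eta)/(1 - eta) * (lam2/lam1 * (lam - lam1)) := mul_le_mul_of_nonneg_right hfac hrhs0
  _ = (1 + eta)/(1 - eta) * (lam2/lam1) * (lam - lam1) := by ring
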